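/- Let Σ be a finite alphabet and let f : Σ_AP^ℤ → {0,1}^ℕ be a Borel shift-invariant function (f(Sx) = f(x)). Then there is a Borel measurable assignment that associates to each triple (x, y, I), where x, y ∈ Σ_AP^ℤ and I ⊆ ℤ with s̲(I) > 0, an element z = z(x, y, I) ∈ {0,1}^I, equivariantly in the sense that z(Sx, Sy, SI) = S(z(x, y, I)) (where (Sz)(i) = z(i+1)), and such that the pair (x, z) determines f(y): there is a map D with D(x, z(x, y, I)) = f(y) for all such triples (x, y, I). -/

import Mathlib

set_option linter.unusedSectionVars false

open Filter
open scoped Classical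

/-- Discrete measurable structure on `Option Bool` (partial binary values). -/
instance optionBoolMeasurableSpace : MeasurableSpace (Option Bool) := ⊤

/-- The shift on `Λ^ℤ`. -/
def shift {Λ : Type*} (x : ℤ → Λ) : ℤ → Λ := fun i => x (i + 1)

/-- The shift on subsets of `ℤ`: `SI = I − 1 = {i : i + 1 ∈ I}`. -/
def shiftSet (I : Set ℤ) : Set ℤ := {i | i + 1 ∈ I}

/-- The shift on partial binary sequences: `(Sz)(i) = z(i+1)`. -/
def shiftPartial (z : ℤ → Option Bool) : ℤ → Option Bool := fun i => z (i + 1)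

/-- A point of `Λ^ℤ` is aperiodic if no shift `S^p`, `p ≥ 1`, fixes it. -/
def Aperiodic {Λ : Type*} (x : ℤ → Λ) : Prop :=
  ∀ p : ℕ, 1 ≤ p → (fun i => x (i + (p : ℤ))) ≠ x

/-- The lower density of `I ⊆ ℤ`: `liminf_N (1/N)·|I ∩ [0,N−1]|`. -/
noncomputable def lowerDensity (I : Set ℤ) : ℝ :=
  liminf (fun N : ℕ => (∑ i ∈ Finset.range N, if (i : ℤ) ∈ I then (1 : ℝ) else 0) / N) atTop

namespace CSID

variable {Λ : Type*} [Fintype Λ]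

def shiftZ (i : ℤ) (x : ℤ → Λ) : ℤ → Λ := fun j => x (j + i)

def shiftSetZ (i : ℤ) (I : Set ℤ) : Set ℤ := {j | j + i ∈ I}

lemma shiftZ_shiftZ (a b : ℤ) (x : ℤ → Λ) : shiftZ a (shiftZ b x) = shiftZ (a + b) x := by
  funext j; simp [shiftZ, add_assoc]

lemma shiftSetZ_shiftSetZ (a b : ℤ) (I : Set ℤ) :
    shiftSetZ a (shiftSetZ b I) = shiftSetZ (a + b) I := by
  ext j; simp [shiftSetZ, add_assoc]

lemma mem_shiftSetZ {i j : ℤ} {I : Set ℤ} : j ∈ shiftSetZ i I ↔ j + i ∈ I := Iff.rfl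

def matchesAt (x : ℤ → Λ) (m : ℤ) (u : List Λ) : Prop :=
  ∀ s : ℕ, (h : s < u.length) → x (m + s) = u.get ⟨s, h⟩

def occursIO (x : ℤ → Λ) (u : List Λ) : Prop :=
  ∀ N : ℤ, ∃ j, N ≤ j ∧ matchesAt x j u

lemma matchesAt_shiftZ {i : ℤ} {x : ℤ → Λ} {m : ℤ} {u : List Λ} :
    matchesAt (shiftZ i x) m u ↔ matchesAt x (m + i) u := by
  unfold matchesAt shiftZ
  constructor <;> intro h s hs
  · rw [add_right_comm]; exact h s hs
  · rw [← add_right_comm]; exact h s hs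

lemma occursIO_shiftZ {i : ℤ} {x : ℤ → Λ} {u : List Λ} :
    occursIO (shiftZ i x) u ↔ occursIO x u := by
  constructor <;> intro h N
  · obtain ⟨j, hj, hm⟩ := h (N - i)
    exact ⟨j + i, by omega, matchesAt_shiftZ.mp hm⟩
  · obtain ⟨j, hj, hm⟩ := h (N + i)
    exact ⟨j - i, by omega, matchesAt_shiftZ.mpr (by simpa using hm)⟩

noncomputable def emb : Λ → ℕ := fun a => (Fintype.equivFin Λ a : ℕ)

lemma emb_inj : Function.Injective (emb (Λ := Λ)) := by
  intro a b h
  have := Fin.val_injective h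
  exact (Fintype.equivFin Λ).injective this

noncomputable def extSet (x : ℤ → Λ) (u : List Λ) : Finset Λ :=
  Finset.univ.filter (fun b => occursIO x (u ++ [b]))

noncomputable def pick (x : ℤ → Λ) (u : List Λ) : Λ :=
  letI : Nonempty Λ := ⟨x 0⟩
  Function.invFun emb ((((extSet x u).image emb).min).getD (emb (x 0)))

lemma pick_mem {x : ℤ → Λ} {u : List Λ} (h : (extSet x u).Nonempty) :
    pick x u ∈ extSet x u := by
  letI : Nonempty Λ := ⟨x 0⟩
  obtain ⟨a, ha⟩ := Finset.min_of_nonempty (h.image emb)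
  have hmem : a ∈ (extSet x u).image emb := Finset.mem_of_min ha
  obtain ⟨b, hb, hbe⟩ := Finset.mem_image.mp hmem
  rw [pick, ha]
  show Function.invFun emb a ∈ _
  rw [← hbe, Function.leftInverse_invFun emb_inj]
  exact hb

noncomputable def word (x : ℤ → Λ) : ℕ → List Λ
  | 0 => []
  | t + 1 => word x t ++ [pick x (word x t)]

lemma word_length (x : ℤ → Λ) (t : ℕ) : (word x t).length = t := by
  induction t with
  | zero => rfl
  | succ t ih => simp [word, ih]

lemma word_prefix (x : ℤ → Λ) {s t : ℕ} (h : s ≤ t) : word x s <+: word x t := by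
  induction t with
  | zero => simp_all
  | succ t ih =>
    rcases Nat.lt_or_ge s (t+1) with h' | h'
    · exact (ih (by omega)).trans ⟨[pick x (word x t)], rfl⟩
    · have : s = t + 1 := by omega
      subst this; exact List.prefix_rfl

lemma matchesAt_mono {x : ℤ → Λ} {m : ℤ} {s t : ℕ} (hst : s ≤ t)
    (h : matchesAt x m (word x t)) : matchesAt x m (word x s) := by
  intro n hn
  have hp := word_prefix x hst
  have hn' : n < (word x t).length := by
    have := hp.length_le; omega
  have := h n hn'
  simp only [List.get_eq_getElem] at this ⊢
  rw [List.IsPrefix.getElem hp hn]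
  exact this

lemma matchesAt_append_single {x : ℤ → Λ} {m : ℤ} {u : List Λ}
    (h : matchesAt x m u) : matchesAt x m (u ++ [x (m + u.length)]) := by
  intro s hs
  simp only [List.length_append, List.length_singleton] at hs
  rcases Nat.lt_or_ge s u.length with h' | h'
  · have := h s h'
    simp only [List.get_eq_getElem] at this ⊢
    rw [List.getElem_append_left h']
    exact this
  · have hs' : s = u.length := by omega
    subst hs'
    simp only [List.get_eq_getElem]
    rw [List.getElem_append_right (le_refl _)]
    simp

lemma extSet_nonempty {x : ℤ → Λ} {u : List Λ} (h : occursIO x u) :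
    (extSet x u).Nonempty := by
  by_contra hne
  -- for each b, ¬ occursIO x (u ++ [b]); get bounds
  have hall : ∀ b : Λ, ∃ N : ℤ, ∀ j, N ≤ j → ¬ matchesAt x j (u ++ [b]) := by
    intro b
    have hb : ¬ occursIO x (u ++ [b]) := by
      intro hocc
      exact hne ⟨b, Finset.mem_filter.mpr ⟨Finset.mem_univ _, hocc⟩⟩
    rw [occursIO] at hb
    push_neg at hb
    obtain ⟨N, hN⟩ := hb
    exact ⟨N, fun j hj hm => hN j hj hm⟩
  choose Nb hNb using hall
  have hΛ : Nonempty Λ := ⟨x 0⟩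
  obtain ⟨N0, hN0⟩ : ∃ N0 : ℤ, ∀ b : Λ, Nb b ≤ N0 := by
    obtain ⟨b0, hb0⟩ := Finset.exists_max_image (Finset.univ : Finset Λ) Nb
      ⟨Classical.arbitrary Λ, Finset.mem_univ _⟩
    exact ⟨Nb b0, fun b => hb0.2 b (Finset.mem_univ _)⟩
  obtain ⟨j, hj, hm⟩ := h N0
  have := matchesAt_append_single hm
  exact hNb (x (j + u.length)) j (le_trans (hN0 _) hj) this

lemma word_occursIO (x : ℤ → Λ) (t : ℕ) : occursIO x (word x t) := by
  induction t with
  | zero => intro N; exact ⟨N, le_refl _, fun s hs => by simp [word] at hs⟩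
  | succ t ih =>
    have hne := extSet_nonempty ih
    have hp := pick_mem hne
    rw [extSet, Finset.mem_filter] at hp
    exact hp.2

lemma extSet_shiftZ (i : ℤ) (x : ℤ → Λ) (u : List Λ) :
    extSet (shiftZ i x) u = extSet x u := by
  unfold extSet
  congr 1
  funext b
  simp [occursIO_shiftZ]

lemma word_shiftZ (i : ℤ) (x : ℤ → Λ) (t : ℕ) : word (shiftZ i x) t = word x t := by
  induction t with
  | zero => rfl
  | succ t ih =>
    have hne : (extSet x (word x t)).Nonempty := extSet_nonempty (word_occursIO x t)
    have hpick : pick (shiftZ i x) (word x t) = pick x (word x t) := by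
      obtain ⟨a, ha⟩ := Finset.min_of_nonempty (hne.image emb)
      unfold pick
      rw [extSet_shiftZ, ha]
      rfl
    rw [word, ih, hpick, word]

def Atail (x : ℤ → Λ) : Set ℤ := {m | ∀ t : ℕ, matchesAt x m (word x t)}

lemma Atail_shiftZ (i : ℤ) (x : ℤ → Λ) : Atail (shiftZ i x) = shiftSetZ i (Atail x) := by
  ext m
  simp only [Atail, Set.mem_setOf_eq, mem_shiftSetZ]
  constructor <;> intro h t
  · have := h t
    rw [word_shiftZ, matchesAt_shiftZ] at this
    exact this
  · rw [word_shiftZ, matchesAt_shiftZ]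
    exact h t

noncomputable def rankAt (x : ℤ → Λ) (m : ℤ) : ℕ :=
  if h : ∃ t : ℕ, ¬ matchesAt x m (word x t) then Nat.find h - 1 else 0

lemma rankAt_ge {x : ℤ → Λ} {m : ℤ} {t : ℕ} (hm : m ∉ Atail x)
    (h : matchesAt x m (word x t)) : t ≤ rankAt x m := by
  have hex : ∃ t : ℕ, ¬ matchesAt x m (word x t) := by
    by_contra hc; push_neg at hc; exact hm hc
  rw [rankAt, dif_pos hex]
  have hfind : t + 1 ≤ Nat.find hex := by
    rw [Nat.le_find_iff]
    intro s hs hns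
    exact hns (matchesAt_mono (by omega) h)
  omega

lemma rankAt_shiftZ (i : ℤ) (x : ℤ → Λ) (m : ℤ) :
    rankAt (shiftZ i x) m = rankAt x (m + i) := by
  unfold rankAt
  have hiff : ∀ t : ℕ, ¬ matchesAt (shiftZ i x) m (word (shiftZ i x) t) ↔
      ¬ matchesAt x (m + i) (word x t) := by
    intro t; rw [word_shiftZ, matchesAt_shiftZ]
  have hp : (fun t : ℕ => ¬ matchesAt (shiftZ i x) m (word (shiftZ i x) t)) =
      (fun t : ℕ => ¬ matchesAt x (m + i) (word x t)) := by
    funext t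
    rw [eq_iff_iff]
    exact hiff t
  simp only [hp]

def hasLeast (J : Set ℤ) : Prop := ∃ a ∈ J, ∀ m ∈ J, a ≤ m

noncomputable def leastOf (J : Set ℤ) : ℤ := if h : hasLeast J then h.choose else 0

lemma leastOf_eq {J : Set ℤ} {a : ℤ} (ha : a ∈ J) (hle : ∀ m ∈ J, a ≤ m) :
    leastOf J = a := by
  have h : hasLeast J := ⟨a, ha, hle⟩
  rw [leastOf, dif_pos h]
  obtain ⟨hc1, hc2⟩ := h.choose_spec
  exact le_antisymm (hc2 a ha) (hle _ hc1)

lemma leastOf_mem {J : Set ℤ} (h : hasLeast J) : leastOf J ∈ J ∧ ∀ m ∈ J, leastOf J ≤ m := by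
  obtain ⟨a, ha, hle⟩ := h
  rw [leastOf_eq ha hle]
  exact ⟨ha, hle⟩

lemma hasLeast_shiftSetZ {i : ℤ} {J : Set ℤ} : hasLeast (shiftSetZ i J) ↔ hasLeast J := by
  constructor
  · rintro ⟨a, ha, hle⟩
    exact ⟨a + i, ha, fun m hm => by have := hle (m - i) (by simpa [mem_shiftSetZ] using hm); omega⟩
  · rintro ⟨a, ha, hle⟩
    exact ⟨a - i, by simpa [mem_shiftSetZ] using ha,
      fun m hm => by have := hle (m + i) hm; omega⟩

lemma leastOf_shiftSetZ {i : ℤ} {J : Set ℤ} (h : hasLeast J) :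
    leastOf (shiftSetZ i J) = leastOf J - i := by
  obtain ⟨hm, hle⟩ := leastOf_mem h
  refine leastOf_eq (by simpa [mem_shiftSetZ] using hm) ?_
  intro m hmm
  have := hle (m + i) hmm
  omega

def anchorCase (x : ℤ → Λ) (I : Set ℤ) : Prop := hasLeast I ∨ (Atail x).Nonempty

noncomputable def anchor (x : ℤ → Λ) (I : Set ℤ) : ℤ :=
  if hasLeast I then leastOf I else leastOf (Atail x)

lemma anchorCase_shiftZ {i : ℤ} {x : ℤ → Λ} {I : Set ℤ} :
    anchorCase (shiftZ i x) (shiftSetZ i I) ↔ anchorCase x I := by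
  unfold anchorCase
  rw [hasLeast_shiftSetZ, Atail_shiftZ]
  constructor
  · rintro (h | ⟨m, hm⟩)
    · exact Or.inl h
    · exact Or.inr ⟨m + i, hm⟩
  · rintro (h | ⟨m, hm⟩)
    · exact Or.inl h
    · exact Or.inr ⟨m - i, by simpa [mem_shiftSetZ] using hm⟩

lemma anchor_shiftZ {i : ℤ} {x : ℤ → Λ} {I : Set ℤ}
    (hc : anchorCase x I)
    (hA : (Atail x).Nonempty → hasLeast (Atail x)) :
    anchor (shiftZ i x) (shiftSetZ i I) = anchor x I - i := by
  unfold anchor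
  rw [Atail_shiftZ]
  by_cases h : hasLeast I
  · rw [if_pos (hasLeast_shiftSetZ.mpr h), if_pos h, leastOf_shiftSetZ h]
  · rw [if_neg (fun hcc => h (hasLeast_shiftSetZ.mp hcc)), if_neg h]
    have h2 : (Atail x).Nonempty := hc.resolve_left h
    exact leastOf_shiftSetZ (hA h2)

noncomputable def cnt (I : Set ℤ) (a b : ℤ) : ℕ :=
  ((Finset.Ico a b).filter (fun m => m ∈ I)).card

lemma cnt_shiftSetZ (i : ℤ) (I : Set ℤ) (a b : ℤ) :
    cnt (shiftSetZ i I) (a - i) (b - i) = cnt I a b := by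
  unfold cnt
  refine Finset.card_bij' (fun m _ => m + i) (fun m _ => m - i) ?_ ?_ ?_ ?_
  · intro m hm
    simp only [Finset.mem_filter, Finset.mem_Ico] at hm ⊢
    obtain ⟨⟨h1, h2⟩, h3⟩ := hm
    exact ⟨⟨by omega, by omega⟩, h3⟩
  · intro m hm
    simp only [Finset.mem_filter, Finset.mem_Ico] at hm ⊢
    obtain ⟨⟨h1, h2⟩, h3⟩ := hm
    exact ⟨⟨by omega, by omega⟩, by simpa [mem_shiftSetZ] using h3⟩
  · intro m hm; omega
  · intro m hm; omega

noncomputable def nxt (I : Set ℤ) : ℤ :=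
  if h : ∃ j : ℕ, ((j : ℤ) + 1) ∈ I then (Nat.find h : ℤ) + 1 else 1

lemma nxt_spec {I : Set ℤ} (h : ∃ j : ℕ, ((j : ℤ) + 1) ∈ I) :
    1 ≤ nxt I ∧ nxt I ∈ I ∧ ∀ m : ℤ, 1 ≤ m → m ∈ I → nxt I ≤ m := by
  rw [nxt, dif_pos h]
  refine ⟨by omega, Nat.find_spec h, ?_⟩
  intro m h1 hm
  have hj : ((m - 1).toNat : ℤ) + 1 = m := by omega
  have hle : Nat.find h ≤ (m - 1).toNat :=
    Nat.find_le (show (((m - 1).toNat : ℤ) + 1) ∈ I by rw [hj]; exact hm)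
  omega

noncomputable def kZero (x : ℤ → Λ) (I : Set ℤ) : ℕ :=
  if anchorCase x I then cnt I (anchor x I) 0
  else (Finset.Icc (1 : ℤ) (nxt I)).sup (fun m => rankAt x m)

def Kset (x : ℤ → Λ) (I : Set ℤ) : Set ℕ :=
  {n | ∃ i ∈ I, kZero (shiftZ i x) (shiftSetZ i I) = n}

noncomputable def iota (x : ℤ → Λ) (I : Set ℤ) : ℕ :=
  Nat.count (· ∈ Kset x I) (kZero x I)

lemma Kset_shiftZ (i : ℤ) (x : ℤ → Λ) (I : Set ℤ) :
    Kset (shiftZ i x) (shiftSetZ i I) = Kset x I := by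
  ext n
  simp only [Kset, Set.mem_setOf_eq]
  constructor
  · rintro ⟨i', hi', hk⟩
    refine ⟨i' + i, hi', ?_⟩
    rwa [shiftZ_shiftZ, shiftSetZ_shiftSetZ] at hk
  · rintro ⟨i', hi', hk⟩
    refine ⟨i' - i, by simpa [mem_shiftSetZ] using hi', ?_⟩
    rw [shiftZ_shiftZ, shiftSetZ_shiftSetZ]
    simpa using hk

noncomputable def Wlet (x : ℤ → Λ) (s : ℕ) : Λ := (word x (s + 1)).getD s (x 0)

lemma Atail_wlet {x : ℤ → Λ} {m : ℤ} (hm : m ∈ Atail x) (s : ℕ) :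
    x (m + s) = Wlet x s := by
  have h := hm (s + 1) s (by rw [word_length]; omega)
  rw [Wlet, List.getD_eq_getElem _ _ (by rw [word_length]; omega)]
  rw [h]
  simp [List.get_eq_getElem]

lemma Atail_hasLeast {x : ℤ → Λ} (hx : Aperiodic x) (hne : (Atail x).Nonempty) :
    hasLeast (Atail x) := by
  by_cases hbdd : ∃ b : ℤ, ∀ m ∈ Atail x, b ≤ m
  · obtain ⟨b, hb⟩ := hbdd
    obtain ⟨lb, hlb1, hlb2⟩ := Int.exists_least_of_bdd (P := fun z => z ∈ Atail x)
      ⟨b, fun z hz => hb z hz⟩ hne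
    exact ⟨lb, hlb1, hlb2⟩
  · exfalso
    push_neg at hbdd
    obtain ⟨m2, hm2⟩ := hne
    obtain ⟨m1, hm1, hm1lt⟩ := hbdd m2
    have hp : (1 : ℤ) ≤ m2 - m1 := by omega
    set p : ℕ := (m2 - m1).toNat with hpdef
    have hpcast : (p : ℤ) = m2 - m1 := by omega
    have hper : ∀ s : ℕ, Wlet x (s + p) = Wlet x s := by
      intro s
      have h1 := Atail_wlet hm1 (s + p)
      have h2 := Atail_wlet hm2 s
      rw [← h1, ← h2]
      congr 1
      push_cast
      omega
    have hperiodic : (fun i => x (i + (p : ℤ))) = x := by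
      funext j
      obtain ⟨m, hm, hmlt⟩ := hbdd (min j (j + p))
      have hmle1 : m ≤ j := le_trans hmlt.le (min_le_left _ _)
      have hmle2 : m ≤ j + p := le_trans hmlt.le (min_le_right _ _)
      have e1 := Atail_wlet hm ((j - m).toNat + p)
      have e2 := Atail_wlet hm ((j - m).toNat)
      rw [show m + (((j - m).toNat + p : ℕ) : ℤ) = j + (p : ℤ) from by push_cast; omega] at e1
      rw [show m + (((j - m).toNat : ℕ) : ℤ) = j from by omega] at e2
      rw [e1, e2, hper]
    exact hx p (by omega) hperiodic

lemma aperiodic_shiftZ {x : ℤ → Λ} (hx : Aperiodic x) (i : ℤ) :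
    Aperiodic (shiftZ i x) := by
  intro p hp hper
  apply hx p hp
  funext j
  have := congrFun hper (j - i)
  simp only [shiftZ] at this
  have e : j - i + (p : ℤ) + i = j + p := by ring
  have e2 : j - i + i = j := by ring
  rw [e, e2] at this
  exact this

lemma exists_ge_of_lowerDensity {I : Set ℤ} (hI : 0 < lowerDensity I) :
    ∀ N : ℤ, ∃ i ∈ I, N ≤ i := by
  intro N
  by_contra hc
  push_neg at hc
  set C : ℕ := N.toNat with hC
  have hbound : ∀ n : ℕ,
      (∑ i ∈ Finset.range n, if (i : ℤ) ∈ I then (1 : ℝ) else 0) ≤ (C : ℝ) := by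
    intro n
    calc (∑ i ∈ Finset.range n, if (i : ℤ) ∈ I then (1 : ℝ) else 0)
        ≤ ∑ i ∈ Finset.range n, (if i < C then (1 : ℝ) else 0) := by
          apply Finset.sum_le_sum
          intro i _
          by_cases hi : (i : ℤ) ∈ I
          · rw [if_pos hi, if_pos (by have := hc i hi; omega)]
          · rw [if_neg hi]
            positivity
      _ = (((Finset.range n).filter (fun i => i < C)).card : ℝ) := by
          rw [Finset.sum_ite, Finset.sum_const, Finset.sum_const]
          simp
      _ ≤ (C : ℝ) := by
          have : ((Finset.range n).filter (fun i => i < C)) ⊆ Finset.range C := by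
            intro i hi
            simp only [Finset.mem_filter, Finset.mem_range] at hi ⊢
            omega
          have := Finset.card_le_card this
          rw [Finset.card_range] at this
          exact_mod_cast this
  have hnn : ∀ n : ℕ,
      0 ≤ (∑ i ∈ Finset.range n, if (i : ℤ) ∈ I then (1 : ℝ) else 0) / n := by
    intro n
    apply div_nonneg _ (by positivity)
    apply Finset.sum_nonneg
    intro i _
    positivity
  have htend : Tendsto
      (fun n : ℕ => (∑ i ∈ Finset.range n, if (i : ℤ) ∈ I then (1 : ℝ) else 0) / n)
      atTop (nhds 0) := by
    apply squeeze_zero hnn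
    · intro n
      exact div_le_div_of_nonneg_right (hbound n) (Nat.cast_nonneg n)
    · exact tendsto_const_div_atTop_nhds_zero_nat (C : ℝ)
  have : lowerDensity I = 0 := htend.liminf_eq
  rw [this] at hI
  exact lt_irrefl _ hI

lemma not_bddBelow_of_not_anchorCase {x : ℤ → Λ} {I : Set ℤ}
    (hI : 0 < lowerDensity I) (hna : ¬ anchorCase x I) :
    ∀ b : ℤ, ∃ m ∈ I, m < b := by
  intro b
  by_contra hc
  push_neg at hc
  obtain ⟨i0, hi0, -⟩ := exists_ge_of_lowerDensity hI 0
  obtain ⟨lb, hlb1, hlb2⟩ := Int.exists_least_of_bdd (P := fun z => z ∈ I)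
    ⟨b, fun z hz => hc z hz⟩ ⟨i0, hi0⟩
  exact hna (Or.inl ⟨lb, hlb1, hlb2⟩)

lemma kZero_shift_anchor {x : ℤ → Λ} {I : Set ℤ} (hx : Aperiodic x)
    (hac : anchorCase x I) {i : ℤ} (_ : i ∈ I) :
    kZero (shiftZ i x) (shiftSetZ i I) = cnt I (anchor x I) i := by
  have hac' : anchorCase (shiftZ i x) (shiftSetZ i I) := anchorCase_shiftZ.mpr hac
  rw [kZero, if_pos hac',
    anchor_shiftZ hac (fun h2 => Atail_hasLeast hx h2)]
  have := cnt_shiftSetZ i I (anchor x I) i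
  rw [sub_self] at this
  exact this

lemma cnt_unbounded {I : Set ℤ} (hI : 0 < lowerDensity I) (a : ℤ) :
    ∀ n : ℕ, ∃ i ∈ I, a ≤ i ∧ n ≤ cnt I a i := by
  intro n
  induction n with
  | zero =>
    obtain ⟨i, hi, hge⟩ := exists_ge_of_lowerDensity hI a
    exact ⟨i, hi, hge, Nat.zero_le _⟩
  | succ n ih =>
    obtain ⟨i, hi, hai, hcnt⟩ := ih
    obtain ⟨i', hi', hge⟩ := exists_ge_of_lowerDensity hI (i + 1)
    refine ⟨i', hi', by omega, ?_⟩
    have hss : ((Finset.Ico a i).filter (fun m => m ∈ I)) ⊂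
        ((Finset.Ico a i').filter (fun m => m ∈ I)) := by
      constructor
      · apply Finset.filter_subset_filter
        apply Finset.Ico_subset_Ico (le_refl _) (by omega)
      · intro hsub
        have : i ∈ (Finset.Ico a i).filter (fun m => m ∈ I) := by
          apply hsub
          simp only [Finset.mem_filter, Finset.mem_Ico]
          exact ⟨⟨hai, by omega⟩, hi⟩
        simp only [Finset.mem_filter, Finset.mem_Ico] at this
        omega
    have := Finset.card_lt_card hss
    unfold cnt at hcnt ⊢
    omega

lemma Kset_infinite {x : ℤ → Λ} {I : Set ℤ} (hx : Aperiodic x)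
    (hI : 0 < lowerDensity I) : (Kset x I).Infinite := by
  apply Set.infinite_of_not_bddAbove
  rintro ⟨c, hc⟩
  by_cases hac : anchorCase x I
  · obtain ⟨i, hi, hai, hcnt⟩ := cnt_unbounded hI (anchor x I) (c + 1)
    have hk : kZero (shiftZ i x) (shiftSetZ i I) = cnt I (anchor x I) i :=
      kZero_shift_anchor hx hac hi
    have hmem : cnt I (anchor x I) i ∈ Kset x I := ⟨i, hi, hk⟩
    have := hc hmem
    omega
  · -- rank case
    have hAe : Atail x = ∅ := by
      rcases Set.eq_empty_or_nonempty (Atail x) with h | h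
      · exact h
      · exact absurd (Or.inr h) hac
    -- find a position with high rank
    obtain ⟨m, -, hm⟩ := word_occursIO x (c + 1) 0
    have hrank : c + 1 ≤ rankAt x m := by
      apply rankAt_ge _ hm
      rw [hAe]
      exact Set.notMem_empty m
    -- greatest element of I below m
    obtain ⟨i, ⟨hiI, him⟩, hgreat⟩ := Int.exists_greatest_of_bdd
      (P := fun z => z ∈ I ∧ z < m) ⟨m, fun z hz => hz.2.le⟩
      (by
        obtain ⟨z, hz, hzlt⟩ := not_bddBelow_of_not_anchorCase hI hac m
        exact ⟨z, hz, hzlt⟩)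
    have hac' : ¬ anchorCase (shiftZ i x) (shiftSetZ i I) :=
      fun h => hac (anchorCase_shiftZ.mp h)
    have hex : ∃ j : ℕ, ((j : ℤ) + 1) ∈ shiftSetZ i I := by
      obtain ⟨i', hi', hge⟩ := exists_ge_of_lowerDensity hI (i + 1)
      refine ⟨(i' - i - 1).toNat, ?_⟩
      rw [mem_shiftSetZ]
      have : ((i' - i - 1).toNat : ℤ) + 1 + i = i' := by omega
      rw [this]
      exact hi'
    obtain ⟨hnu1, hnu2, hnu3⟩ := nxt_spec hex
    set ν := nxt (shiftSetZ i I) with hν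
    -- m - i ≤ ν
    have hmi : m - i ≤ ν := by
      by_contra hlt
      push_neg at hlt
      have hν_in : ν + i ∈ I := by
        rw [mem_shiftSetZ] at hnu2
        exact hnu2
      have := hgreat (ν + i) ⟨hν_in, by omega⟩
      omega
    have hmem : m - i ∈ Finset.Icc (1 : ℤ) ν := by
      simp only [Finset.mem_Icc]
      omega
    have hsup : rankAt (shiftZ i x) (m - i) ≤
        (Finset.Icc (1 : ℤ) ν).sup (fun m' => rankAt (shiftZ i x) m') :=
      Finset.le_sup hmem
    rw [rankAt_shiftZ] at hsup
    have hmm : m - i + i = m := by ring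
    rw [hmm] at hsup
    have hk : kZero (shiftZ i x) (shiftSetZ i I) =
        (Finset.Icc (1 : ℤ) ν).sup (fun m' => rankAt (shiftZ i x) m') := by
      rw [kZero, if_neg hac']
    have hmem2 : (Finset.Icc (1 : ℤ) ν).sup (fun m' => rankAt (shiftZ i x) m') ∈ Kset x I :=
      ⟨i, hiI, hk⟩
    have := hc hmem2
    omega

lemma iota_surj {x : ℤ → Λ} {I : Set ℤ} (hx : Aperiodic x)
    (hI : 0 < lowerDensity I) :
    ∀ j : ℕ, ∃ i ∈ I, iota (shiftZ i x) (shiftSetZ i I) = j := by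
  intro j
  have hinf : (setOf (· ∈ Kset x I)).Infinite := by
    have : setOf (· ∈ Kset x I) = Kset x I := rfl
    rw [this]
    exact Kset_infinite hx hI
  have hmem := Nat.nth_mem_of_infinite hinf j
  obtain ⟨i, hi, hk⟩ := hmem
  refine ⟨i, hi, ?_⟩
  rw [iota, Kset_shiftZ, hk]
  exact Nat.count_nth_of_infinite hinf j

noncomputable def zfun (f : (ℤ → Λ) → ℕ → Bool) (x y : ℤ → Λ) (I : Set ℤ) :
    ℤ → Option Bool :=
  fun i => if i ∈ I then some (f (shiftZ i y) (iota (shiftZ i x) (shiftSetZ i I))) else none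

lemma zfun_isSome (f : (ℤ → Λ) → ℕ → Bool) (x y : ℤ → Λ) (I : Set ℤ) (i : ℤ) :
    (zfun f x y I i).isSome ↔ i ∈ I := by
  rw [zfun]
  by_cases h : i ∈ I
  · rw [if_pos h]; simpa using h
  · rw [if_neg h]; simpa using h

lemma shift_eq_shiftZ (y : ℤ → Λ) : shift y = shiftZ 1 y := rfl

lemma shiftSet_eq_shiftSetZ (I : Set ℤ) : shiftSet I = shiftSetZ 1 I := rfl

lemma zfun_equivariant (f : (ℤ → Λ) → ℕ → Bool) (x y : ℤ → Λ) (I : Set ℤ) :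
    zfun f (shift x) (shift y) (shiftSet I) = shiftPartial (zfun f x y I) := by
  funext i
  show _ = zfun f x y I (i + 1)
  rw [zfun, zfun, shift_eq_shiftZ, shift_eq_shiftZ, shiftSet_eq_shiftSetZ,
    shiftZ_shiftZ, shiftZ_shiftZ, shiftSetZ_shiftSetZ]
  rfl

lemma f_shiftZ (f : (ℤ → Λ) → ℕ → Bool)
    (hinv : ∀ x : ℤ → Λ, Aperiodic x → f (shift x) = f x)
    {y : ℤ → Λ} (hy : Aperiodic y) : ∀ i : ℤ, f (shiftZ i y) = f y := by
  have hshift : ∀ j : ℤ, shift (shiftZ j y) = shiftZ (j + 1) y := by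
    intro j
    funext k
    show y (k + 1 + j) = y (k + (j + 1))
    congr 1
    ring
  intro i
  induction i using Int.induction_on with
  | zero =>
    have h0 : shiftZ (0 : ℤ) y = y := by
      funext j
      show y (j + 0) = y j
      rw [add_zero]
    rw [h0]
  | succ i ih =>
    rw [← hshift (i : ℤ), hinv _ (aperiodic_shiftZ hy (i : ℤ)), ih]
  | pred i ih =>
    have h1 : shift (shiftZ (-(i : ℤ) - 1) y) = shiftZ (-(i : ℤ)) y := by
      rw [hshift]
      congr 1
      ring
    have := hinv _ (aperiodic_shiftZ hy (-(i : ℤ) - 1))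
    rw [h1] at this
    rw [← this, ih]

lemma zfun_welldef (f : (ℤ → Λ) → ℕ → Bool)
    (hinv : ∀ x : ℤ → Λ, Aperiodic x → f (shift x) = f x)
    {x y y' : ℤ → Λ} {I I' : Set ℤ}
    (hx : Aperiodic x) (hy : Aperiodic y) (hy' : Aperiodic y')
    (hI : 0 < lowerDensity I) (hI' : 0 < lowerDensity I')
    (heq : zfun f x y I = zfun f x y' I') : f y = f y' := by
  have hII : I = I' := by
    ext i
    rw [← zfun_isSome f x y I i, ← zfun_isSome f x y' I' i, heq]
  subst hII
  funext j
  obtain ⟨i, hi, hiota⟩ := iota_surj hx hI j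
  have hcf := congrFun heq i
  rw [zfun, zfun, if_pos hi, if_pos hi] at hcf
  have := Option.some_injective _ hcf
  rw [hiota] at this
  rw [← f_shiftZ f hinv hy i, ← f_shiftZ f hinv hy' i, this]

section Meas

variable [MeasurableSpace Λ] [DiscreteMeasurableSpace Λ]

abbrev Q (Λ : Type*) := (ℤ → Λ) × Set ℤ

lemma meas_cyl (j : ℤ) (b : Λ) : MeasurableSet {q : Q Λ | q.1 j = b} := by
  have h1 : Measurable (fun q : Q Λ => q.1 j) := (measurable_pi_apply j).comp measurable_fst
  exact h1 (MeasurableSet.singleton b)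

lemma meas_memI (j : ℤ) : MeasurableSet {q : Q Λ | j ∈ q.2} := by
  have h1 : Measurable (fun q : Q Λ => (j ∈ q.2 : Prop)) :=
    (measurable_pi_apply j).comp measurable_snd
  exact measurableSet_setOf.mpr h1

lemma meas_matchesAt (m : ℤ) (u : List Λ) :
    MeasurableSet {q : Q Λ | matchesAt q.1 m u} := by
  have : {q : Q Λ | matchesAt q.1 m u} =
      ⋂ s : ℕ, {q : Q Λ | ∀ h : s < u.length, q.1 (m + s) = u.get ⟨s, h⟩} := by
    ext q
    simp only [Set.mem_iInter, Set.mem_setOf_eq, matchesAt]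
  rw [this]
  apply MeasurableSet.iInter
  intro s
  by_cases h : s < u.length
  · have : {q : Q Λ | ∀ h' : s < u.length, q.1 (m + s) = u.get ⟨s, h'⟩} =
        {q : Q Λ | q.1 (m + s) = u.get ⟨s, h⟩} := by
      ext q
      exact ⟨fun H => H h, fun H _ => H⟩
    rw [this]
    exact meas_cyl _ _
  · have : {q : Q Λ | ∀ h' : s < u.length, q.1 (m + s) = u.get ⟨s, h'⟩} = Set.univ := by
      ext q
      simp [h]
    rw [this]
    exact MeasurableSet.univ

lemma meas_occursIO (u : List Λ) :
    MeasurableSet {q : Q Λ | occursIO q.1 u} := by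
  have : {q : Q Λ | occursIO q.1 u} =
      ⋂ N : ℤ, ⋃ j : ℤ, ⋃ _ : N ≤ j, {q : Q Λ | matchesAt q.1 j u} := by
    ext q
    simp only [Set.mem_iInter, Set.mem_iUnion, Set.mem_setOf_eq, occursIO]
    constructor
    · intro h N; obtain ⟨j, h1, h2⟩ := h N; exact ⟨j, h1, h2⟩
    · intro h N; obtain ⟨j, h1, h2⟩ := h N; exact ⟨j, h1, h2⟩
  rw [this]
  apply MeasurableSet.iInter
  intro N
  apply MeasurableSet.iUnion
  intro j
  apply MeasurableSet.iUnion
  intro _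
  exact meas_matchesAt _ _

lemma meas_extSet (u : List Λ) (S : Finset Λ) :
    MeasurableSet {q : Q Λ | extSet q.1 u = S} := by
  have : {q : Q Λ | extSet q.1 u = S} =
      ⋂ b : Λ, (if b ∈ S then {q : Q Λ | occursIO q.1 (u ++ [b])}
        else {q : Q Λ | occursIO q.1 (u ++ [b])}ᶜ) := by
    ext q
    simp only [Set.mem_iInter]
    constructor
    · intro h b
      by_cases hb : b ∈ S
      · rw [if_pos hb]
        rw [← h, extSet, Finset.mem_filter] at hb
        exact hb.2
      · rw [if_neg hb]
        intro hocc
        exact hb (h ▸ Finset.mem_filter.mpr ⟨Finset.mem_univ _, hocc⟩)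
    · intro h
      ext b
      have hb := h b
      rw [extSet, Finset.mem_filter]
      by_cases hbS : b ∈ S
      · rw [if_pos hbS] at hb
        simp only [Set.mem_setOf_eq] at hb
        simp [hbS, hb]
      · rw [if_neg hbS] at hb
        simp only [Set.mem_compl_iff, Set.mem_setOf_eq] at hb
        simp [hbS, hb]
  rw [this]
  apply MeasurableSet.iInter
  intro b
  by_cases hb : b ∈ S
  · rw [if_pos hb]; exact meas_occursIO _
  · rw [if_neg hb]; exact (meas_occursIO _).compl

noncomputable def pickVal (S : Finset Λ) (a : Λ) : Λ :=
  letI : Nonempty Λ := ⟨a⟩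
  Function.invFun emb (((S.image emb).min).getD (emb a))

lemma pick_eq_pickVal (x : ℤ → Λ) (u : List Λ) : pick x u = pickVal (extSet x u) (x 0) := rfl

lemma meas_pick (u : List Λ) (b : Λ) :
    MeasurableSet {q : Q Λ | pick q.1 u = b} := by
  have : {q : Q Λ | pick q.1 u = b} =
      ⋃ S : Finset Λ, ⋃ a : Λ, ⋃ _ : pickVal S a = b,
        ({q : Q Λ | extSet q.1 u = S} ∩ {q : Q Λ | q.1 0 = a}) := by
    ext q
    simp only [Set.mem_iUnion, Set.mem_inter_iff, Set.mem_setOf_eq]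
    constructor
    · intro h
      exact ⟨extSet q.1 u, q.1 0, by rw [← pick_eq_pickVal, h], rfl, rfl⟩
    · rintro ⟨S, a, hv, h1, h2⟩
      rw [pick_eq_pickVal, h1, h2, hv]
  rw [this]
  apply MeasurableSet.iUnion; intro S
  apply MeasurableSet.iUnion; intro a
  apply MeasurableSet.iUnion; intro _
  exact (meas_extSet _ _).inter (meas_cyl _ _)

lemma meas_word (t : ℕ) (u : List Λ) :
    MeasurableSet {q : Q Λ | word q.1 t = u} := by
  induction t generalizing u with
  | zero =>
    by_cases h : u = []
    · subst h
      have : {q : Q Λ | word q.1 0 = ([] : List Λ)} = Set.univ := by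
        ext q; simp [word]
      rw [this]; exact MeasurableSet.univ
    · have : {q : Q Λ | word q.1 0 = u} = ∅ := by
        ext q
        simp only [Set.mem_setOf_eq, Set.mem_empty_iff_false, iff_false]
        intro hc
        apply h
        rw [← hc]
        rfl
      rw [this]; exact MeasurableSet.empty
  | succ t ih =>
    have : {q : Q Λ | word q.1 (t+1) = u} =
        ⋃ v : List Λ, ⋃ b : Λ, ⋃ _ : v ++ [b] = u,
          ({q : Q Λ | word q.1 t = v} ∩ {q : Q Λ | pick q.1 v = b}) := by
      ext q
      simp only [Set.mem_iUnion, Set.mem_inter_iff, Set.mem_setOf_eq]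
      constructor
      · intro h
        exact ⟨word q.1 t, pick q.1 (word q.1 t), h, rfl, rfl⟩
      · rintro ⟨v, b, hvb, h1, h2⟩
        rw [word, h1, h2, hvb]
    rw [this]
    apply MeasurableSet.iUnion; intro v
    apply MeasurableSet.iUnion; intro b
    apply MeasurableSet.iUnion; intro _
    exact (ih v).inter (meas_pick _ _)

lemma meas_matchWord (m : ℤ) (t : ℕ) :
    MeasurableSet {q : Q Λ | matchesAt q.1 m (word q.1 t)} := by
  have : {q : Q Λ | matchesAt q.1 m (word q.1 t)} =
      ⋃ u : List Λ, ({q : Q Λ | word q.1 t = u} ∩ {q : Q Λ | matchesAt q.1 m u}) := by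
    ext q
    simp only [Set.mem_iUnion, Set.mem_inter_iff, Set.mem_setOf_eq]
    constructor
    · intro h; exact ⟨word q.1 t, rfl, h⟩
    · rintro ⟨u, h1, h2⟩; rw [h1]; exact h2
  rw [this]
  apply MeasurableSet.iUnion; intro u
  exact (meas_word _ _).inter (meas_matchesAt _ _)

lemma meas_memAtail (m : ℤ) : MeasurableSet {q : Q Λ | m ∈ Atail q.1} := by
  have : {q : Q Λ | m ∈ Atail q.1} = ⋂ t : ℕ, {q : Q Λ | matchesAt q.1 m (word q.1 t)} := by
    ext q; simp [Atail]
  rw [this]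
  exact MeasurableSet.iInter (fun t => meas_matchWord m t)

lemma rankAt_eq_iff (x : ℤ → Λ) (m : ℤ) (n : ℕ) :
    rankAt x m = n ↔
      ((∀ t, matchesAt x m (word x t)) ∧ n = 0) ∨
      (∃ k, (∀ s < k, matchesAt x m (word x s)) ∧ ¬ matchesAt x m (word x k) ∧ k - 1 = n) := by
  rw [rankAt]
  by_cases h : ∃ t : ℕ, ¬ matchesAt x m (word x t)
  · rw [dif_pos h]
    constructor
    · intro hn
      refine Or.inr ⟨Nat.find h, ?_, Nat.find_spec h, hn⟩
      intro s hs
      by_contra hc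
      have h2 : Nat.find h ≤ s := Nat.find_le hc
      omega
    · rintro (⟨hall, -⟩ | ⟨k, hks, hk, hkn⟩)
      · exact absurd h (by push_neg; exact fun t => hall t)
      · have : Nat.find h = k := by
          rw [Nat.find_eq_iff]
          exact ⟨hk, fun s hs => not_not_intro (hks s hs)⟩
        omega
  · rw [dif_neg h]
    push_neg at h
    constructor
    · intro hn
      exact Or.inl ⟨h, hn.symm⟩
    · rintro (⟨-, hn⟩ | ⟨k, -, hk, -⟩)
      · exact hn.symm
      · exact absurd (h k) hk

lemma meas_rank (m : ℤ) : Measurable (fun q : Q Λ => rankAt q.1 m) := by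
  apply measurable_to_countable'
  intro n
  have : (fun q : Q Λ => rankAt q.1 m) ⁻¹' {n} =
      ((⋂ t : ℕ, {q : Q Λ | matchesAt q.1 m (word q.1 t)}) ∩
        (if n = 0 then Set.univ else ∅)) ∪
      (⋃ k : ℕ, ⋃ _ : k - 1 = n,
        ((⋂ s : ℕ, ⋂ _ : s < k, {q : Q Λ | matchesAt q.1 m (word q.1 s)}) ∩
          {q : Q Λ | matchesAt q.1 m (word q.1 k)}ᶜ)) := by
    ext q
    simp only [Set.mem_preimage, Set.mem_singleton_iff, Set.mem_union, Set.mem_inter_iff,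
      Set.mem_iInter, Set.mem_iUnion, Set.mem_setOf_eq, Set.mem_compl_iff]
    rw [rankAt_eq_iff]
    constructor
    · rintro (⟨h1, h2⟩ | ⟨k, h1, h2, h3⟩)
      · exact Or.inl ⟨h1, by rw [if_pos h2]; trivial⟩
      · exact Or.inr ⟨k, h3, fun s hs => h1 s hs, h2⟩
    · rintro (⟨h1, h2⟩ | ⟨k, h3, h1, h2⟩)
      · refine Or.inl ⟨h1, ?_⟩
        by_cases hn : n = 0
        · exact hn
        · rw [if_neg hn] at h2; exact absurd h2 (Set.notMem_empty q)
      · exact Or.inr ⟨k, fun s hs => h1 s hs, h2, h3⟩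
  rw [this]
  apply MeasurableSet.union
  · apply MeasurableSet.inter
    · exact MeasurableSet.iInter (fun t => meas_matchWord m t)
    · by_cases hn : n = 0
      · rw [if_pos hn]; exact MeasurableSet.univ
      · rw [if_neg hn]; exact MeasurableSet.empty
  · apply MeasurableSet.iUnion; intro k
    apply MeasurableSet.iUnion; intro _
    apply MeasurableSet.inter
    · exact MeasurableSet.iInter (fun s => MeasurableSet.iInter (fun _ => meas_matchWord m s))
    · exact (meas_matchWord m k).compl

variable {J : Q Λ → Set ℤ}

lemma meas_hasLeastJ (hJ : ∀ m : ℤ, MeasurableSet {q : Q Λ | m ∈ J q}) :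
    MeasurableSet {q : Q Λ | hasLeast (J q)} := by
  have : {q : Q Λ | hasLeast (J q)} =
      ⋃ a : ℤ, ({q : Q Λ | a ∈ J q} ∩
        ⋂ m : ℤ, ({q : Q Λ | m ∈ J q}ᶜ ∪ {q : Q Λ | a ≤ m})) := by
    ext q
    simp only [Set.mem_iUnion, Set.mem_inter_iff, Set.mem_iInter, Set.mem_union,
      Set.mem_setOf_eq, Set.mem_compl_iff, hasLeast]
    constructor
    · rintro ⟨a, ha, hle⟩
      refine ⟨a, ha, fun m => ?_⟩
      by_cases hm : m ∈ J q
      · exact Or.inr (hle m hm)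
      · exact Or.inl hm
    · rintro ⟨a, ha, hle⟩
      refine ⟨a, ha, fun m hm => ?_⟩
      rcases hle m with h | h
      · exact absurd hm h
      · exact h
  rw [this]
  apply MeasurableSet.iUnion; intro a
  apply MeasurableSet.inter (hJ a)
  apply MeasurableSet.iInter; intro m
  apply MeasurableSet.union (hJ m).compl
  by_cases h : a ≤ m
  · have : {q : Q Λ | a ≤ m} = Set.univ := by ext q; simp [h]
    rw [this]; exact MeasurableSet.univ
  · have : {q : Q Λ | a ≤ m} = ∅ := by ext q; simp [h]
    rw [this]; exact MeasurableSet.empty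

lemma meas_leastOfJ (hJ : ∀ m : ℤ, MeasurableSet {q : Q Λ | m ∈ J q}) :
    Measurable (fun q : Q Λ => leastOf (J q)) := by
  apply measurable_to_countable'
  intro a
  have : (fun q : Q Λ => leastOf (J q)) ⁻¹' {a} =
      ({q : Q Λ | hasLeast (J q)} ∩ ({q : Q Λ | a ∈ J q} ∩
        ⋂ m : ℤ, ({q : Q Λ | m ∈ J q}ᶜ ∪ {q : Q Λ | a ≤ m}))) ∪
      ({q : Q Λ | hasLeast (J q)}ᶜ ∩ (if a = 0 then Set.univ else ∅)) := by
    ext q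
    simp only [Set.mem_preimage, Set.mem_singleton_iff, Set.mem_union, Set.mem_inter_iff,
      Set.mem_iInter, Set.mem_setOf_eq, Set.mem_compl_iff]
    constructor
    · intro h
      by_cases hl : hasLeast (J q)
      · obtain ⟨hmem, hle⟩ := leastOf_mem hl
        rw [h] at hmem hle
        refine Or.inl ⟨hl, hmem, fun m => ?_⟩
        by_cases hm : m ∈ J q
        · exact Or.inr (hle m hm)
        · exact Or.inl hm
      · rw [leastOf, dif_neg hl] at h
        refine Or.inr ⟨hl, ?_⟩
        rw [if_pos h.symm]
        trivial
    · rintro (⟨hl, ha, hle⟩ | ⟨hl, ha⟩)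
      · apply leastOf_eq ha
        intro m hm
        rcases hle m with h | h
        · exact absurd hm h
        · exact h
      · rw [leastOf, dif_neg hl]
        by_cases h0 : a = 0
        · exact h0.symm
        · rw [if_neg h0] at ha; exact absurd ha (Set.notMem_empty q)
  rw [this]
  apply MeasurableSet.union
  · apply MeasurableSet.inter (meas_hasLeastJ hJ)
    apply MeasurableSet.inter (hJ a)
    apply MeasurableSet.iInter; intro m
    apply MeasurableSet.union (hJ m).compl
    by_cases h : a ≤ m
    · have : {q : Q Λ | a ≤ m} = Set.univ := by ext q; simp [h]
      rw [this]; exact MeasurableSet.univ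
    · have : {q : Q Λ | a ≤ m} = ∅ := by ext q; simp [h]
      rw [this]; exact MeasurableSet.empty
  · apply MeasurableSet.inter (meas_hasLeastJ hJ).compl
    by_cases h0 : a = 0
    · rw [if_pos h0]; exact MeasurableSet.univ
    · rw [if_neg h0]; exact MeasurableSet.empty

lemma meas_anchorCase : MeasurableSet {q : Q Λ | anchorCase q.1 q.2} := by
  have : {q : Q Λ | anchorCase q.1 q.2} =
      {q : Q Λ | hasLeast q.2} ∪ ⋃ m : ℤ, {q : Q Λ | m ∈ Atail q.1} := by
    ext q
    simp only [Set.mem_union, Set.mem_iUnion, Set.mem_setOf_eq, anchorCase, Set.Nonempty]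
  rw [this]
  exact MeasurableSet.union (meas_hasLeastJ (J := fun q => q.2) (fun m => meas_memI m))
    (MeasurableSet.iUnion (fun m => meas_memAtail m))

lemma meas_anchor : Measurable (fun q : Q Λ => anchor q.1 q.2) := by
  unfold anchor
  apply Measurable.ite
  · exact meas_hasLeastJ (J := fun q => q.2) (fun m => meas_memI m)
  · exact meas_leastOfJ (J := fun q => q.2) (fun m => meas_memI m)
  · exact meas_leastOfJ (J := fun q => Atail q.1) (fun m => meas_memAtail m)

lemma meas_filter_card {β : Type*} [Countable β] (s : Finset β) (P : β → Q Λ → Prop)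
    (hP : ∀ b, MeasurableSet {q : Q Λ | P b q}) :
    Measurable (fun q : Q Λ => (s.filter (fun b => P b q)).card) := by
  apply measurable_to_countable'
  intro c
  have : (fun q : Q Λ => (s.filter (fun b => P b q)).card) ⁻¹' {c} =
      ⋃ t : Finset β, ⋃ _ : t ⊆ s ∧ t.card = c,
        ⋂ b ∈ s, (if b ∈ t then {q : Q Λ | P b q} else {q : Q Λ | P b q}ᶜ) := by
    ext q
    simp only [Set.mem_preimage, Set.mem_singleton_iff, Set.mem_iUnion, Set.mem_iInter]
    constructor
    · intro h
      refine ⟨s.filter (fun b => P b q), ⟨Finset.filter_subset _ _, h⟩, ?_⟩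
      intro b hb
      by_cases hbt : b ∈ s.filter (fun b => P b q)
      · rw [if_pos hbt]
        exact (Finset.mem_filter.mp hbt).2
      · rw [if_neg hbt]
        intro hc
        exact hbt (Finset.mem_filter.mpr ⟨hb, hc⟩)
    · rintro ⟨t, ⟨hts, htc⟩, h⟩
      have : s.filter (fun b => P b q) = t := by
        ext b
        rw [Finset.mem_filter]
        constructor
        · rintro ⟨hbs, hbp⟩
          have := h b hbs
          by_contra hbt
          rw [if_neg hbt] at this
          exact this hbp
        · intro hbt
          have hbs := hts hbt
          have := h b hbs
          rw [if_pos hbt] at this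
          exact ⟨hbs, this⟩
      rw [this, htc]
  rw [this]
  apply MeasurableSet.iUnion; intro t
  apply MeasurableSet.iUnion; intro _
  apply MeasurableSet.biInter (Set.to_countable _)
  intro b _
  by_cases hbt : b ∈ t
  · rw [if_pos hbt]; exact hP b
  · rw [if_neg hbt]; exact (hP b).compl

lemma meas_cnt_anchor : Measurable (fun q : Q Λ => cnt q.2 (anchor q.1 q.2) 0) := by
  apply measurable_to_countable'
  intro n
  have : (fun q : Q Λ => cnt q.2 (anchor q.1 q.2) 0) ⁻¹' {n} =
      ⋃ a : ℤ, ((fun q : Q Λ => anchor q.1 q.2) ⁻¹' {a} ∩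
        (fun q : Q Λ => cnt q.2 a 0) ⁻¹' {n}) := by
    ext q
    simp only [Set.mem_preimage, Set.mem_singleton_iff, Set.mem_iUnion, Set.mem_inter_iff]
    constructor
    · intro h
      exact ⟨anchor q.1 q.2, rfl, h⟩
    · rintro ⟨a, h1, h2⟩
      rw [h1]; exact h2
  rw [this]
  apply MeasurableSet.iUnion; intro a
  apply MeasurableSet.inter
  · exact meas_anchor (MeasurableSet.singleton a)
  · have : Measurable (fun q : Q Λ => cnt q.2 a 0) := by
      unfold cnt
      exact meas_filter_card (Finset.Ico a 0) (fun m q => m ∈ q.2) (fun m => meas_memI m)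
    exact this (MeasurableSet.singleton n)

lemma nxt_eq_iff (I : Set ℤ) (v : ℤ) :
    nxt I = v ↔
      ((∃ j : ℕ, ((j : ℤ) + 1) ∈ I) ∧ 1 ≤ v ∧ v ∈ I ∧ ∀ m : ℤ, 1 ≤ m → m < v → m ∉ I) ∨
      ((¬ ∃ j : ℕ, ((j : ℤ) + 1) ∈ I) ∧ v = 1) := by
  by_cases h : ∃ j : ℕ, ((j : ℤ) + 1) ∈ I
  · obtain ⟨h1, h2, h3⟩ := nxt_spec h
    constructor
    · intro hv
      refine Or.inl ⟨h, ?_, ?_, ?_⟩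
      · omega
      · rw [← hv]; exact h2
      · intro m hm1 hm2 hmI
        have := h3 m hm1 hmI
        omega
    · rintro (⟨-, hv1, hv2, hv3⟩ | ⟨hc, -⟩)
      · have hle := h3 v hv1 hv2
        by_contra hne
        have hlt : nxt I < v := by omega
        exact hv3 (nxt I) h1 hlt h2
      · exact absurd h hc
  · rw [nxt, dif_neg h]
    constructor
    · intro hv; exact Or.inr ⟨h, hv.symm⟩
    · rintro (⟨hc, -⟩ | ⟨-, hv⟩)
      · exact absurd hc h
      · exact hv.symm

lemma meas_nxt : Measurable (fun q : Q Λ => nxt q.2) := by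
  apply measurable_to_countable'
  intro v
  have hE : MeasurableSet {q : Q Λ | ∃ j : ℕ, ((j : ℤ) + 1) ∈ q.2} := by
    have : {q : Q Λ | ∃ j : ℕ, ((j : ℤ) + 1) ∈ q.2} =
        ⋃ j : ℕ, {q : Q Λ | ((j : ℤ) + 1) ∈ q.2} := by
      ext q; simp
    rw [this]
    exact MeasurableSet.iUnion (fun j => meas_memI _)
  have : (fun q : Q Λ => nxt q.2) ⁻¹' {v} =
      ({q : Q Λ | ∃ j : ℕ, ((j : ℤ) + 1) ∈ q.2} ∩
        ((if 1 ≤ v then Set.univ else ∅) ∩ {q : Q Λ | v ∈ q.2} ∩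
          ⋂ m : ℤ, ⋂ _ : 1 ≤ m ∧ m < v, {q : Q Λ | m ∈ q.2}ᶜ)) ∪
      ({q : Q Λ | ∃ j : ℕ, ((j : ℤ) + 1) ∈ q.2}ᶜ ∩ (if v = 1 then Set.univ else ∅)) := by
    ext q
    simp only [Set.mem_preimage, Set.mem_singleton_iff, Set.mem_union, Set.mem_inter_iff,
      Set.mem_iInter, Set.mem_setOf_eq, Set.mem_compl_iff]
    rw [nxt_eq_iff]
    constructor
    · rintro (⟨h1, h2, h3, h4⟩ | ⟨h1, h2⟩)
      · refine Or.inl ⟨h1, ⟨⟨by rw [if_pos h2]; trivial, h3⟩, ?_⟩⟩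
        intro m hm
        exact h4 m hm.1 hm.2
      · exact Or.inr ⟨h1, by rw [if_pos h2]; trivial⟩
    · rintro (⟨h1, ⟨⟨h2, h3⟩, h4⟩⟩ | ⟨h1, h2⟩)
      · refine Or.inl ⟨h1, ?_, h3, ?_⟩
        · by_contra hc
          rw [if_neg hc] at h2
          exact Set.notMem_empty q h2
        · intro m hm1 hm2
          exact h4 m ⟨hm1, hm2⟩
      · refine Or.inr ⟨h1, ?_⟩
        by_contra hc
        rw [if_neg hc] at h2
        exact Set.notMem_empty q h2
  rw [this]
  apply MeasurableSet.union
  · apply MeasurableSet.inter hE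
    apply MeasurableSet.inter
    · apply MeasurableSet.inter
      · by_cases h : (1 : ℤ) ≤ v
        · rw [if_pos h]; exact MeasurableSet.univ
        · rw [if_neg h]; exact MeasurableSet.empty
      · exact meas_memI v
    · apply MeasurableSet.iInter; intro m
      apply MeasurableSet.iInter; intro _
      exact (meas_memI m).compl
  · apply MeasurableSet.inter hE.compl
    by_cases h : v = 1
    · rw [if_pos h]; exact MeasurableSet.univ
    · rw [if_neg h]; exact MeasurableSet.empty

lemma meas_finset_sup (s : Finset ℤ) :
    Measurable (fun q : Q Λ => s.sup (fun m => rankAt q.1 m)) := by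
  induction s using Finset.induction_on with
  | empty => simp only [Finset.sup_empty]; exact measurable_const
  | @insert a s ha ih =>
    have : (fun q : Q Λ => (insert a s).sup (fun m => rankAt q.1 m)) =
        fun q => max (rankAt q.1 a) (s.sup (fun m => rankAt q.1 m)) := by
      funext q
      rw [Finset.sup_insert]
    rw [this]
    exact Measurable.max (meas_rank a) ih

lemma meas_kZero : Measurable (fun q : Q Λ => kZero q.1 q.2) := by
  unfold kZero
  apply Measurable.ite meas_anchorCase meas_cnt_anchor
  apply measurable_to_countable'
  intro n
  have : (fun q : Q Λ => (Finset.Icc (1 : ℤ) (nxt q.2)).sup (fun m => rankAt q.1 m)) ⁻¹' {n} =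
      ⋃ v : ℤ, ((fun q : Q Λ => nxt q.2) ⁻¹' {v} ∩
        (fun q : Q Λ => (Finset.Icc (1 : ℤ) v).sup (fun m => rankAt q.1 m)) ⁻¹' {n}) := by
    ext q
    simp only [Set.mem_preimage, Set.mem_singleton_iff, Set.mem_iUnion, Set.mem_inter_iff]
    constructor
    · intro h
      exact ⟨nxt q.2, rfl, h⟩
    · rintro ⟨v, h1, h2⟩
      rw [h1]; exact h2
  rw [this]
  apply MeasurableSet.iUnion; intro v
  exact MeasurableSet.inter (meas_nxt (MeasurableSet.singleton v))
    ((meas_finset_sup _) (MeasurableSet.singleton n))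

lemma meas_shiftMap (i : ℤ) :
    Measurable (fun q : Q Λ => ((shiftZ i q.1, shiftSetZ i q.2) : Q Λ)) := by
  apply Measurable.prod
  · apply measurable_pi_lambda
    intro j
    exact (measurable_pi_apply (j + i)).comp measurable_fst
  · apply measurable_pi_lambda
    intro j
    exact (measurable_pi_apply (j + i)).comp measurable_snd

lemma meas_Kmem (n : ℕ) : MeasurableSet {q : Q Λ | n ∈ Kset q.1 q.2} := by
  have : {q : Q Λ | n ∈ Kset q.1 q.2} =
      ⋃ i : ℤ, ({q : Q Λ | i ∈ q.2} ∩
        ((fun q : Q Λ => ((shiftZ i q.1, shiftSetZ i q.2) : Q Λ)) ⁻¹'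
          ((fun q : Q Λ => kZero q.1 q.2) ⁻¹' {n}))) := by
    ext q
    simp only [Set.mem_iUnion, Set.mem_inter_iff, Set.mem_setOf_eq, Set.mem_preimage,
      Set.mem_singleton_iff, Kset]
  rw [this]
  apply MeasurableSet.iUnion; intro i
  exact MeasurableSet.inter (meas_memI i)
    ((meas_shiftMap i) (meas_kZero (MeasurableSet.singleton n)))

lemma meas_iota : Measurable (fun q : Q Λ => iota q.1 q.2) := by
  have hrw : (fun q : Q Λ => iota q.1 q.2) =
      (fun q : Q Λ =>
        ((Finset.range (kZero q.1 q.2)).filter (fun n => n ∈ Kset q.1 q.2)).card) := by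
    funext q
    rw [iota, Nat.count_eq_card_filter_range]
  rw [hrw]
  apply measurable_to_countable'
  intro c
  have : (fun q : Q Λ =>
        ((Finset.range (kZero q.1 q.2)).filter (fun n => n ∈ Kset q.1 q.2)).card) ⁻¹' {c} =
      ⋃ v : ℕ, ((fun q : Q Λ => kZero q.1 q.2) ⁻¹' {v} ∩
        (fun q : Q Λ => ((Finset.range v).filter (fun n => n ∈ Kset q.1 q.2)).card) ⁻¹' {c}) := by
    ext q
    simp only [Set.mem_preimage, Set.mem_singleton_iff, Set.mem_iUnion, Set.mem_inter_iff]
    constructor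
    · intro h
      exact ⟨kZero q.1 q.2, rfl, h⟩
    · rintro ⟨v, h1, h2⟩
      rw [h1]; exact h2
  rw [this]
  apply MeasurableSet.iUnion; intro v
  apply MeasurableSet.inter (meas_kZero (MeasurableSet.singleton v))
  exact (meas_filter_card (Finset.range v) (fun n q => n ∈ Kset q.1 q.2)
    (fun n => meas_Kmem n)) (MeasurableSet.singleton c)

lemma meas_zfun (f : (ℤ → Λ) → ℕ → Bool) (hf : Measurable f) :
    Measurable (fun p : (ℤ → Λ) × (ℤ → Λ) × Set ℤ => zfun f p.1 p.2.1 p.2.2) := by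
  apply measurable_pi_lambda
  intro i
  -- coordinate i
  have hcond : MeasurableSet {p : (ℤ → Λ) × (ℤ → Λ) × Set ℤ | i ∈ p.2.2} := by
    apply measurableSet_setOf.mpr
    exact (measurable_pi_apply i).comp (measurable_snd.comp measurable_snd)
  have hxI : Measurable (fun p : (ℤ → Λ) × (ℤ → Λ) × Set ℤ => ((p.1, p.2.2) : Q Λ)) :=
    Measurable.prodMk measurable_fst (measurable_snd.comp measurable_snd)
  have hiota : Measurable (fun p : (ℤ → Λ) × (ℤ → Λ) × Set ℤ =>
      iota (shiftZ i p.1) (shiftSetZ i p.2.2)) := by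
    have := (meas_iota.comp ((meas_shiftMap i).comp hxI))
    exact this
  have hval : Measurable (fun p : (ℤ → Λ) × (ℤ → Λ) × Set ℤ =>
      f (shiftZ i p.2.1) (iota (shiftZ i p.1) (shiftSetZ i p.2.2))) := by
    apply measurable_to_countable'
    intro b
    have : (fun p : (ℤ → Λ) × (ℤ → Λ) × Set ℤ =>
        f (shiftZ i p.2.1) (iota (shiftZ i p.1) (shiftSetZ i p.2.2))) ⁻¹' {b} =
        ⋃ n : ℕ, ((fun p : (ℤ → Λ) × (ℤ → Λ) × Set ℤ =>
            iota (shiftZ i p.1) (shiftSetZ i p.2.2)) ⁻¹' {n} ∩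
          {p : (ℤ → Λ) × (ℤ → Λ) × Set ℤ | f (shiftZ i p.2.1) n = b}) := by
      ext p
      simp only [Set.mem_preimage, Set.mem_singleton_iff, Set.mem_iUnion, Set.mem_inter_iff,
        Set.mem_setOf_eq]
      constructor
      · intro h
        exact ⟨_, rfl, h⟩
      · rintro ⟨n, h1, h2⟩
        rw [h1]; exact h2
    rw [this]
    apply MeasurableSet.iUnion; intro n
    apply MeasurableSet.inter (hiota (MeasurableSet.singleton n))
    have hshifty : Measurable (fun p : (ℤ → Λ) × (ℤ → Λ) × Set ℤ => shiftZ i p.2.1) := by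
      apply measurable_pi_lambda
      intro j
      exact (measurable_pi_apply (j + i)).comp (measurable_fst.comp measurable_snd)
    have hm : Measurable (fun p : (ℤ → Λ) × (ℤ → Λ) × Set ℤ => f (shiftZ i p.2.1) n) :=
      (measurable_pi_apply n).comp (hf.comp hshifty)
    exact hm (MeasurableSet.singleton b)
  show Measurable (fun p : (ℤ → Λ) × (ℤ → Λ) × Set ℤ =>
    if i ∈ p.2.2 then
      some (f (shiftZ i p.2.1) (iota (shiftZ i p.1) (shiftSetZ i p.2.2))) else none)
  apply Measurable.ite hcond
  · have hsome : Measurable (fun b : Bool => (some b : Option Bool)) := by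
      apply measurable_to_countable'
      intro o
      exact MeasurableSet.of_discrete
    exact hsome.comp hval
  · exact measurable_const

end Meas

end CSID

/-- **Coding shift-invariant data.** Let `Λ` be a finite alphabet and
`f : Λ_AP^ℤ → {0,1}^ℕ` a Borel shift-invariant function. Then one can associate, Borel
measurably and equivariantly, to each `x, y ∈ Λ_AP^ℤ` and `I ⊆ ℤ` with `s̲(I) > 0` an
element `z = z(x,y,I) ∈ {0,1}^I` such that `(x,z)` determines `f(y)`. -/
theorem coding_shift_invariant_data {Λ : Type*} [Fintype Λ]
    [MeasurableSpace Λ] [DiscreteMeasurableSpace Λ]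
    (f : (ℤ → Λ) → (ℕ → Bool)) (hf : Measurable f)
    (hinv : ∀ x : ℤ → Λ, Aperiodic x → f (shift x) = f x) :
    ∃ z : (ℤ → Λ) → (ℤ → Λ) → Set ℤ → (ℤ → Option Bool),
      Measurable (fun p : (ℤ → Λ) × (ℤ → Λ) × Set ℤ => z p.1 p.2.1 p.2.2) ∧
      (∀ (x y : ℤ → Λ) (I : Set ℤ), Aperiodic x → Aperiodic y → 0 < lowerDensity I →
        -- `z(x,y,I)` is an element of `{0,1}^I`
        (∀ i : ℤ, (z x y I i).isSome ↔ i ∈ I) ∧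
        -- equivariance: `z(Sx, Sy, SI) = S(z(x,y,I))`
        z (shift x) (shift y) (shiftSet I) = shiftPartial (z x y I)) ∧
      -- `(x, z)` determines `f(y)`
      ∃ D : (ℤ → Λ) → (ℤ → Option Bool) → (ℕ → Bool),
        ∀ (x y : ℤ → Λ) (I : Set ℤ), Aperiodic x → Aperiodic y → 0 < lowerDensity I →
          D x (z x y I) = f y := by
  refine ⟨fun x y I => CSID.zfun f x y I, CSID.meas_zfun f hf, ?_, ?_⟩
  · intro x y I hx hy hI
    exact ⟨CSID.zfun_isSome f x y I, CSID.zfun_equivariant f x y I⟩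
  · refine ⟨fun x w =>
      if h : ∃ p : (ℤ → Λ) × Set ℤ,
          Aperiodic x ∧ Aperiodic p.1 ∧ 0 < lowerDensity p.2 ∧ CSID.zfun f x p.1 p.2 = w
      then f h.choose.1 else fun _ => false, ?_⟩
    intro x y I hx hy hI
    have hex : ∃ p : (ℤ → Λ) × Set ℤ,
        Aperiodic x ∧ Aperiodic p.1 ∧ 0 < lowerDensity p.2 ∧
          CSID.zfun f x p.1 p.2 = CSID.zfun f x y I := ⟨(y, I), hx, hy, hI, rfl⟩
    show (if h : ∃ p : (ℤ → Λ) × Set ℤ,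
        Aperiodic x ∧ Aperiodic p.1 ∧ 0 < lowerDensity p.2 ∧
          CSID.zfun f x p.1 p.2 = CSID.zfun f x y I
      then f h.choose.1 else fun _ => false) = f y
    rw [dif_pos hex]
    obtain ⟨-, hy', hI', heq⟩ := hex.choose_spec
    exact CSID.zfun_welldef f hinv hx hy' hy hI' hI heq
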